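/- Let z₁ be the first coordinate of a uniform random point on S^{n₂−1}, with density f(t) ∝ (1−t²)^{(n₂−3)/2} on [−1,1], and let T := c·z₁ for a constant c with sqrt(1−γ) ≤ c ≤ 1/sqrt(1−γ), where γ := 8e²λ₀/n₂ ≤ ε/4 ≤ 1/4 and λ₀ ≥ 1, ε ∈ (0,1]. Then for every t with |t| ≤ sqrt((2/3)·ε/(ε + 16e²λ₀)), the point t is in the support of T and the log-density ratio satisfies ln(f_{z₁}(t)/f_T(t)) ≤ ε/2. -/

import Mathlib

set_option maxHeartbeats 2000000


/-- Univariate log-density-ratio bound: if `z₁` has density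
`f(t) = C (1 - t²)^{(n₂-3)/2}` on `[-1, 1]` and `T = c·z₁` with
`√(1-γ) ≤ c ≤ 1/√(1-γ)` where `γ = 8e²λ₀/n₂ ≤ ε/4`, then every `t` with
`|t| ≤ √((2/3)·ε/(ε + 16e²λ₀))` lies in the support of `T` and
`ln(f_{z₁}(t)/f_T(t)) ≤ ε/2`, where `f_T(t) = c⁻¹ f(t/c)`. -/
theorem stmt_8 (n₂ : ℕ) (hn₂ : 0 < n₂) (lam₀ ε c t C : ℝ)
    (hlam : 1 ≤ lam₀) (hε0 : 0 < ε) (hε1 : ε ≤ 1) (hC : 0 < C)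
    (hγ : 8 * Real.exp 1 ^ 2 * lam₀ / n₂ ≤ ε / 4)
    (hc1 : Real.sqrt (1 - 8 * Real.exp 1 ^ 2 * lam₀ / n₂) ≤ c)
    (hc2 : c ≤ (Real.sqrt (1 - 8 * Real.exp 1 ^ 2 * lam₀ / n₂))⁻¹)
    (ht : |t| ≤ Real.sqrt (2 / 3 * (ε / (ε + 16 * Real.exp 1 ^ 2 * lam₀)))) :
    |t / c| < 1 ∧
      Real.log ((C * (1 - t ^ 2) ^ (((n₂ : ℝ) - 3) / 2)) /
        (c⁻¹ * (C * (1 - (t / c) ^ 2) ^ (((n₂ : ℝ) - 3) / 2)))) ≤ ε / 2 := by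
  have he : (2.7:ℝ) < Real.exp 1 := lt_trans (by norm_num) Real.exp_one_gt_d9
  have hE : (7:ℝ) < Real.exp 1 ^ 2 := by nlinarith
  set E := Real.exp 1 ^ 2 with hEdef
  have hE0 : (0:ℝ) < E := by positivity
  have hlam0 : (0:ℝ) < lam₀ := lt_of_lt_of_le one_pos hlam
  have hn : (0:ℝ) < (n₂:ℝ) := by exact_mod_cast hn₂
  set γ := 8 * E * lam₀ / (n₂:ℝ) with hγdef
  have hγ0 : 0 < γ := div_pos (by nlinarith) hn
  have hγ4 : γ ≤ 1/4 := le_trans hγ (by linarith)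
  have h1γ : (3/4:ℝ) ≤ 1 - γ := by linarith
  have hsqpos : (0:ℝ) < Real.sqrt (1-γ) := Real.sqrt_pos.2 (by linarith)
  have hcpos : 0 < c := lt_of_lt_of_le hsqpos hc1
  have hc2sq : 1 - γ ≤ c^2 := by
    have h := Real.sq_sqrt (by linarith : (0:ℝ) ≤ 1-γ)
    nlinarith [hc1, hsqpos]
  -- bound on t²
  have hden : (0:ℝ) < ε + 16*E*lam₀ := by nlinarith
  have hB0 : (0:ℝ) ≤ 2/3 * (ε / (ε + 16*E*lam₀)) := by positivity
  have hs : t^2 ≤ 2/3 * (ε / (ε + 16*E*lam₀)) := by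
    have h1 := mul_self_le_mul_self (abs_nonneg t) ht
    rw [Real.mul_self_sqrt hB0] at h1
    nlinarith [sq_abs t]
  have hsmul : t^2 * (ε + 16*E*lam₀) ≤ 2/3 * ε := by
    have h2 : 2/3 * (ε / (ε + 16*E*lam₀)) * (ε + 16*E*lam₀) = 2/3 * ε := by
      field_simp
    nlinarith [mul_le_mul_of_nonneg_right hs hden.le]
  have hs100 : t^2 ≤ 1/100 := by nlinarith [sq_nonneg t]
  -- first part
  have habs : |t/c| < 1 := by
    rw [abs_div, abs_of_pos hcpos, div_lt_one hcpos]
    have hsq : |t|^2 < c^2 := by nlinarith [sq_abs t]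
    exact lt_of_pow_lt_pow_left₀ 2 hcpos.le hsq
  refine ⟨habs, ?_⟩
  -- positivity of the bases
  have h1s : (0:ℝ) < 1 - t^2 := by nlinarith
  have hs'le : (t/c)^2 ≤ t^2/(1-γ) := by
    rw [div_pow, div_le_div_iff₀ (by nlinarith) (by linarith)]
    nlinarith [sq_nonneg t]
  have hm : (0:ℝ) < 1 - t^2/(1-γ) := by
    have h : t^2/(1-γ) < 1 := (div_lt_one (by linarith)).2 (by nlinarith)
    linarith
  have h1s' : (0:ℝ) < 1 - (t/c)^2 := by nlinarith
  set p := ((n₂:ℝ) - 3)/2 with hpdef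
  have hn224 : (224:ℝ) ≤ (n₂:ℝ) := by
    rw [hγdef] at hγ4
    rw [div_le_iff₀ hn] at hγ4
    nlinarith
  have hp0 : (0:ℝ) ≤ p := by rw [hpdef]; linarith
  -- rewrite the log
  rw [Real.log_div (by positivity) (by positivity), Real.log_mul (ne_of_gt hC)
    (by positivity), Real.log_mul (by positivity) (by positivity),
    Real.log_mul (ne_of_gt hC) (by positivity),
    Real.log_rpow h1s, Real.log_rpow h1s', Real.log_inv]
  -- bound log c
  have hγn : γ * (n₂:ℝ) = 8*E*lam₀ := by rw [hγdef]; field_simp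
  have hlogc : Real.log c ≤ ε/6 := by
    have h1 : Real.log c ≤ Real.log (Real.sqrt (1-γ))⁻¹ :=
      Real.log_le_log hcpos hc2
    rw [Real.log_inv, Real.log_sqrt (by linarith)] at h1
    have h2 := Real.log_le_sub_one_of_pos (show (0:ℝ) < (1-γ)⁻¹ by positivity)
    rw [Real.log_inv] at h2
    have h3 : (1-γ)⁻¹ - 1 ≤ ε/3 := by
      have heq : (1-γ)⁻¹ - 1 = γ/(1-γ) := by field_simp; ring
      rw [heq, div_le_iff₀ (by linarith : (0:ℝ) < 1-γ)]
      linarith [mul_le_mul_of_nonneg_left h1γ (le_of_lt hε0)]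
    linarith
  -- bound the main term
  have hmono : Real.log (1 - t^2/(1-γ)) ≤ Real.log (1-(t/c)^2) :=
    Real.log_le_log hm (by linarith)
  have hlog1 : Real.log (1-t^2) - Real.log (1 - t^2/(1-γ)) ≤ t^2*γ/(1-γ-t^2) := by
    have h := Real.log_le_sub_one_of_pos (show (0:ℝ) < (1-t^2)/(1-t^2/(1-γ)) by positivity)
    rw [Real.log_div (ne_of_gt h1s) (ne_of_gt hm)] at h
    have hD0 : (0:ℝ) < 1 - γ - t^2 := by linarith
    have e1 : 1 - t^2/(1-γ) ≠ 0 := ne_of_gt hm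
    have e2 : 1 - γ - t^2 ≠ 0 := ne_of_gt hD0
    have e3 : (1:ℝ) - γ ≠ 0 := by linarith
    have heq : (1-t^2)/(1-t^2/(1-γ)) - 1 = t^2*γ/(1-γ-t^2) := by
      field_simp
      ring
    rw [heq] at h
    linarith
  have hD0 : (0:ℝ) < 1 - γ - t^2 := by linarith
  have hDhalf : (1/2:ℝ) ≤ 1 - γ - t^2 := by linarith
  have h24 : 24*E*lam₀*t^2 ≤ ε := by
    linarith [hsmul, mul_nonneg (sq_nonneg t) hε0.le]
  have key : p * (t^2*γ/(1-γ-t^2)) ≤ ε/3 := by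
    rw [show p * (t^2*γ/(1-γ-t^2)) = (p*(t^2*γ))/(1-γ-t^2) by ring,
      div_le_iff₀ hD0, hpdef]
    have h8 : (n₂:ℝ)*γ*t^2 = 8*E*lam₀*t^2 := by
      rw [hγdef]; field_simp
    linarith [h8, h24, mul_nonneg hγ0.le (sq_nonneg t),
      mul_le_mul_of_nonneg_left (show γ + t^2 ≤ (1:ℝ)/2 by linarith) (le_of_lt hε0)]
  have hmain : p * Real.log (1-t^2) - p * Real.log (1-(t/c)^2) ≤ ε/3 := by
    have h1 : Real.log (1-t^2) - Real.log (1-(t/c)^2) ≤ t^2*γ/(1-γ-t^2) := by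
      linarith
    linarith [mul_le_mul_of_nonneg_left h1 hp0, key]
  linarith
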